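/- Fix real constants α^{RT} > α^{DA} > 0, β^{DA} ∈ ℝ and a demand d > 0. Define the single-load expenditure f(x) := (α^{DA}·x + β^{DA})·x + (α^{RT}·(d − x) + α^{DA}·x + β^{DA})·(d − x) for x ∈ ℝ. Then f attains its minimum over [0, ∞) at the unique point x* = (1 − α^{DA}/(2·α^{RT}))·d; in particular the optimal two-stage participation is d^{DA*} = (1 − α^{DA}/(2·α^{RT}))·d and d^{RT*} = (α^{DA}/(2·α^{RT}))·d. -/
import Mathlib


/-- Single strategic load's optimal participation. With
`α^{RT} > α^{DA} > 0`, `β^{DA} ∈ ℝ`, demand `d > 0`, and expenditure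
`f x = (α^{DA} x + β^{DA}) x + (α^{RT} (d - x) + α^{DA} x + β^{DA}) (d - x)`,
`f` attains its minimum over `[0, ∞)` at the unique point
`x* = (1 - α^{DA} / (2 α^{RT})) d`. -/
theorem single_load_optimal_participation
    (aDA aRT bDA d : ℝ) (h0 : 0 < aDA) (hlt : aDA < aRT) (hd : 0 < d)
    (f : ℝ → ℝ)
    (hf : ∀ x : ℝ, f x = (aDA * x + bDA) * x
        + (aRT * (d - x) + aDA * x + bDA) * (d - x))
    (xstar : ℝ) (hx : xstar = (1 - aDA / (2 * aRT)) * d) :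
    0 ≤ xstar ∧
    (∀ x : ℝ, 0 ≤ x → f xstar ≤ f x) ∧
    (∀ x : ℝ, 0 ≤ x → f x = f xstar → x = xstar) := by
  have hRT : (0:ℝ) < aRT := h0.trans hlt
  have hne : (2 * aRT) ≠ 0 := by positivity
  have key : ∀ x : ℝ, f x = f xstar + aRT * (x - xstar) ^ 2 := by
    intro x
    rw [hf x, hf xstar, hx]
    field_simp
    ring
  refine ⟨?_, ?_, ?_⟩
  · rw [hx]
    have : aDA / (2 * aRT) < 1 := by
      rw [div_lt_one (by positivity)]
      linarith
    nlinarith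
  · intro x _
    rw [key x]
    nlinarith [sq_nonneg (x - xstar)]
  · intro x _ hfx
    have := key x
    rw [hfx] at this
    have h2 : aRT * (x - xstar) ^ 2 = 0 := by linarith
    have : (x - xstar) ^ 2 = 0 := by
      rcases mul_eq_zero.1 h2 with h | h
      · exact absurd h (ne_of_gt hRT)
      · exact h
    have := pow_eq_zero_iff (n := 2) (by norm_num) |>.1 this
    linarith
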